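/- Let G be a connected simple graph on a finite vertex set V with |V| = n ≥ 2, and let r be a vertex of G. Then G has exactly one valid DFS ordering starting at r if and only if G is a path graph with endpoint r, i.e., the vertices of G can be enumerated w_1, …, w_n with w_1 = r such that the edge set of G is exactly {{w_j, w_{j+1}} : 1 ≤ j < n}. -/
import Mathlib


/-- In the ordering `f` of the vertices of `G`, the vertex `f i` has a neighbor in `G`
outside the set `{f i' : i' < j}` of the first `j` visited vertices. -/
def HasNewNbr {V : Type*} (G : SimpleGraph V) {n : ℕ} (f : Fin n → V) (j : ℕ) (i : Fin n) :
    Prop :=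
  ∃ w : V, G.Adj (f i) w ∧ ∀ i' : Fin n, (i' : ℕ) < j → f i' ≠ w

/-- `f` is a valid DFS ordering of `G`: `f` is a bijective enumeration of the vertices, and
for every index `j ≥ 1` the vertex `f j` is adjacent in `G` to `f i`, where `i` is the largest
index below `j` such that `f i` has a neighbor in `G` outside the first `j` visited vertices. -/
def IsDFSOrder {V : Type*} (G : SimpleGraph V) {n : ℕ} (f : Fin n → V) : Prop :=
  Function.Bijective f ∧
  ∀ j : Fin n, 0 < (j : ℕ) →
    ∃ i : Fin n, (i : ℕ) < (j : ℕ) ∧ HasNewNbr G f (j : ℕ) i ∧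
      (∀ i' : Fin n, (i' : ℕ) < (j : ℕ) → HasNewNbr G f (j : ℕ) i' → (i' : ℕ) ≤ (i : ℕ)) ∧
      G.Adj (f i) (f j)

/-- `H` is a path graph with endpoint `r`: its vertices can be enumerated `w 0, …, w (m-1)`
with `w 0 = r` such that the edges of `H` are exactly the pairs of consecutive vertices of
the enumeration. -/
def IsPathGraphFrom {α : Type*} (H : SimpleGraph α) (r : α) : Prop :=
  ∃ (m : ℕ) (w : Fin m → α), Function.Bijective w ∧
    (∀ i : Fin m, (i : ℕ) = 0 → w i = r) ∧
    ∀ a b : α, H.Adj a b ↔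
      ∃ (j : Fin m) (hj : (j : ℕ) + 1 < m),
        (w j = a ∧ w ⟨(j : ℕ) + 1, hj⟩ = b) ∨ (w j = b ∧ w ⟨(j : ℕ) + 1, hj⟩ = a)

section DFSAux

variable {V : Type*} {G : SimpleGraph V} {n : ℕ}

def DFSCond (G : SimpleGraph V) (f : Fin n → V) (j : Fin n) : Prop :=
  ∃ i : Fin n, (i : ℕ) < (j : ℕ) ∧ HasNewNbr G f (j : ℕ) i ∧
    (∀ i' : Fin n, (i' : ℕ) < (j : ℕ) → HasNewNbr G f (j : ℕ) i' → (i' : ℕ) ≤ (i : ℕ)) ∧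
    G.Adj (f i) (f j)

def PartialDFS (G : SimpleGraph V) (f : Fin n → V) (k : ℕ) : Prop :=
  (∀ i i' : Fin n, (i : ℕ) < k → (i' : ℕ) < k → f i = f i' → i = i') ∧
  ∀ j : Fin n, 0 < (j : ℕ) → (j : ℕ) < k → DFSCond G f j

lemma partialDFS_mono {f : Fin n → V} {k k' : ℕ} (h : k ≤ k') (hf : PartialDFS G f k') :
    PartialDFS G f k :=
  ⟨fun i i' hi hi' => hf.1 i i' (lt_of_lt_of_le hi h) (lt_of_lt_of_le hi' h),
   fun j hj0 hjk => hf.2 j hj0 (lt_of_lt_of_le hjk h)⟩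

lemma isDFSOrder_iff_partialDFS [Fintype V] (hn : Fintype.card V = n) (f : Fin n → V) :
    IsDFSOrder G f ↔ PartialDFS G f n := by
  constructor
  · rintro ⟨hbij, hcond⟩
    exact ⟨fun i i' _ _ h => hbij.1 h, fun j hj0 _ => hcond j hj0⟩
  · rintro ⟨hinj, hcond⟩
    have hinj' : Function.Injective f := fun i i' h => hinj i i' i.isLt i'.isLt h
    refine ⟨(Fintype.bijective_iff_injective_and_card f).2 ⟨hinj', by simp [hn]⟩, ?_⟩
    exact fun j hj0 => hcond j hj0 j.isLt

lemma hasNewNbr_congr {f f' : Fin n → V} {j : ℕ}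
    (h : ∀ i' : Fin n, (i' : ℕ) < j → f i' = f' i') {i : Fin n} (hfi : f i = f' i) :
    HasNewNbr G f j i ↔ HasNewNbr G f' j i := by
  constructor
  · rintro ⟨w, hw1, hw2⟩
    exact ⟨w, by rw [← hfi]; exact hw1, fun i' hi' => by rw [← h i' hi']; exact hw2 i' hi'⟩
  · rintro ⟨w, hw1, hw2⟩
    exact ⟨w, by rw [hfi]; exact hw1, fun i' hi' => by rw [h i' hi']; exact hw2 i' hi'⟩

lemma dfscond_congr {f f' : Fin n → V} {j : Fin n}
    (h : ∀ i' : Fin n, (i' : ℕ) ≤ (j : ℕ) → f i' = f' i') :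
    DFSCond G f j ↔ DFSCond G f' j := by
  have hlt : ∀ i' : Fin n, (i' : ℕ) < (j : ℕ) → f i' = f' i' :=
    fun i' hi' => h i' (le_of_lt hi')
  constructor
  · rintro ⟨i, hi1, hi2, hi3, hi4⟩
    refine ⟨i, hi1, (hasNewNbr_congr hlt (hlt i hi1)).1 hi2, ?_, ?_⟩
    · exact fun i' h1 h2 => hi3 i' h1 ((hasNewNbr_congr hlt (hlt i' h1)).2 h2)
    · rw [← hlt i hi1, ← h j le_rfl]; exact hi4
  · rintro ⟨i, hi1, hi2, hi3, hi4⟩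
    refine ⟨i, hi1, (hasNewNbr_congr hlt (hlt i hi1)).2 hi2, ?_, ?_⟩
    · exact fun i' h1 h2 => hi3 i' h1 ((hasNewNbr_congr hlt (hlt i' h1)).1 h2)
    · rw [hlt i hi1, h j le_rfl]; exact hi4

lemma frontier_of_walk {a b : V} (p : G.Walk a b) (S : Set V) (ha : a ∈ S) (hb : b ∉ S) :
    ∃ x y, x ∈ S ∧ y ∉ S ∧ G.Adj x y := by
  induction p with
  | nil => exact absurd ha hb
  | @cons u v c h q ih =>
    by_cases hc : v ∈ S
    · exact ih hc hb
    · exact ⟨u, v, ha, hc, h⟩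

lemma exists_active [Fintype V] (hG : G.Connected) (hn : Fintype.card V = n)
    {f : Fin n → V} {k : ℕ} (hk1 : 1 ≤ k) (hkn : k < n) :
    ∃ i : Fin n, (i : ℕ) < k ∧ HasNewNbr G f k i := by
  classical
  have hn0 : 0 < n := lt_of_le_of_lt (Nat.zero_le k) hkn
  set S : Set V := {v | ∃ i : Fin n, (i : ℕ) < k ∧ f i = v} with hS
  -- find an unvisited vertex
  set T : Finset V := Finset.image (fun i : Fin k => f (Fin.castLE (le_of_lt hkn) i))
    Finset.univ with hT
  have hTcard : T.card < Fintype.card V := by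
    calc T.card ≤ (Finset.univ : Finset (Fin k)).card := Finset.card_image_le
    _ = k := by simp
    _ < n := hkn
    _ = Fintype.card V := hn.symm
  have : ∃ u : V, u ∉ T := by
    by_contra hcon
    push_neg at hcon
    have : (Finset.univ : Finset V) ⊆ T := fun u _ => hcon u
    have := Finset.card_le_card this
    simp only [Finset.card_univ] at this
    omega
  obtain ⟨u, hu⟩ := this
  have huS : u ∉ S := by
    rintro ⟨i, hik, rfl⟩
    exact hu (Finset.mem_image.2 ⟨⟨(i : ℕ), hik⟩, Finset.mem_univ _, by
      congr 1⟩)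
  have h0S : f ⟨0, hn0⟩ ∈ S := ⟨⟨0, hn0⟩, hk1, rfl⟩
  obtain ⟨x, y, hxS, hyS, hxy⟩ :=
    frontier_of_walk ((hG.preconnected (f ⟨0, hn0⟩) u).some) S h0S huS
  obtain ⟨i, hik, rfl⟩ := hxS
  exact ⟨i, hik, ⟨y, hxy, fun i' hi' heq => hyS ⟨i', hi', heq⟩⟩⟩

lemma step_lemma {f : Fin n → V} {k : ℕ} (hkn : k < n)
    (hf : PartialDFS G f k) {i : Fin n} (hik : (i : ℕ) < k)
    (hnew : HasNewNbr G f k i)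
    (hmax : ∀ i' : Fin n, (i' : ℕ) < k → HasNewNbr G f k i' → (i' : ℕ) ≤ (i : ℕ))
    {w : V} (hadj : G.Adj (f i) w) (hwnew : ∀ i' : Fin n, (i' : ℕ) < k → f i' ≠ w) :
    ∃ f' : Fin n → V, (∀ i' : Fin n, (i' : ℕ) < k → f' i' = f i') ∧
      f' ⟨k, hkn⟩ = w ∧ PartialDFS G f' (k + 1) := by
  classical
  set K : Fin n := ⟨k, hkn⟩ with hK
  set f' : Fin n → V := Function.update f K w with hf'
  have hag : ∀ i' : Fin n, (i' : ℕ) < k → f' i' = f i' := by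
    intro i' hi'
    apply Function.update_of_ne
    intro h
    rw [h] at hi'
    exact absurd hi' (lt_irrefl k)
  have hfK : f' K = w := Function.update_self _ _ _
  refine ⟨f', hag, hfK, ?_, ?_⟩
  · -- injectivity up to k+1
    intro a b ha hb hab
    rcases Nat.lt_or_ge (a : ℕ) k with ha' | ha' <;>
      rcases Nat.lt_or_ge (b : ℕ) k with hb' | hb'
    · exact hf.1 a b ha' hb' (by rw [hag a ha', hag b hb'] at hab; exact hab)
    · have hbk : (b : ℕ) = k := by omega
      have hbK : b = K := Fin.ext hbk
      rw [hag a ha', hbK, hfK] at hab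
      exact absurd hab (hwnew a ha')
    · have hak : (a : ℕ) = k := by omega
      have haK : a = K := Fin.ext hak
      rw [haK, hfK, hag b hb'] at hab
      exact absurd hab.symm (hwnew b hb')
    · exact Fin.ext (by omega)
  · intro j hj0 hjk
    rcases Nat.lt_or_ge (j : ℕ) k with hjk' | hjk'
    · refine (dfscond_congr (f := f) ?_).1 (hf.2 j hj0 hjk')
      intro i' hi'
      exact (hag i' (lt_of_le_of_lt hi' hjk')).symm
    · have hjK : j = K := by
        apply Fin.ext
        show (j : ℕ) = k
        omega
      subst hjK
      have hagK : ∀ i' : Fin n, (i' : ℕ) < (K : ℕ) → f i' = f' i' :=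
        fun i' hi' => (hag i' hi').symm
      refine ⟨i, hik, (hasNewNbr_congr hagK (hagK i hik)).1 hnew, ?_, ?_⟩
      · exact fun i' h1 h2 => hmax i' h1 ((hasNewNbr_congr hagK (hagK i' h1)).2 h2)
      · rw [← hagK i hik, hfK]; exact hadj

lemma extend_lemma [Fintype V] (hG : G.Connected) (hn : Fintype.card V = n) :
    ∀ m k : ℕ, k + m = n → 1 ≤ k → ∀ f : Fin n → V, PartialDFS G f k →
      ∃ f' : Fin n → V, (∀ i : Fin n, (i : ℕ) < k → f' i = f i) ∧ PartialDFS G f' n := by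
  classical
  intro m
  induction m with
  | zero =>
    intro k hk _ f hf
    exact ⟨f, fun _ _ => rfl, by rwa [← Nat.add_zero k, hk] at hf⟩
  | succ m ih =>
    intro k hk hk1 f hf
    have hkn : k < n := by omega
    obtain ⟨i0, hi0k, hi0new⟩ := exists_active hG hn hk1 hkn (f := f)
    set T : Finset (Fin n) :=
      Finset.univ.filter (fun i : Fin n => (i : ℕ) < k ∧ HasNewNbr G f k i) with hT
    have hTne : T.Nonempty := ⟨i0, by simp [hT, hi0k, hi0new]⟩
    set i : Fin n := T.max' hTne with hi
    have hiT : i ∈ T := T.max'_mem hTne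
    simp only [hT, Finset.mem_filter] at hiT
    obtain ⟨-, hik, hinew⟩ := hiT
    have hmax : ∀ i' : Fin n, (i' : ℕ) < k → HasNewNbr G f k i' → (i' : ℕ) ≤ (i : ℕ) := by
      intro i' h1 h2
      exact Finset.le_max' T i' (by simp [hT, h1, h2])
    obtain ⟨w, hadj, hwnew⟩ := hinew
    obtain ⟨f1, hag1, hf1K, hf1⟩ :=
      step_lemma hkn hf hik ⟨w, hadj, hwnew⟩ hmax hadj hwnew
    obtain ⟨f2, hag2, hf2⟩ := ih (k + 1) (by omega) (by omega) f1 hf1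
    exact ⟨f2, fun i' hi' => by rw [hag2 i' (by omega), hag1 i' hi'], hf2⟩

end DFSAux
section Main

variable {V : Type*} {G : SimpleGraph V} {n : ℕ}

lemma no_far_edge [Fintype V] (hG : G.Connected) (hn : Fintype.card V = n) {r : V}
    {f : Fin n → V} (hf : IsDFSOrder G f) (hf0 : ∀ i : Fin n, (i : ℕ) = 0 → f i = r)
    (huniq : ∀ g : Fin n → V,
      (IsDFSOrder G g ∧ ∀ i : Fin n, (i : ℕ) = 0 → g i = r) → g = f)
    {p q : Fin n} (hpq : (p : ℕ) + 1 < (q : ℕ)) : ¬ G.Adj (f p) (f q) := by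
  intro hadj
  have hP : PartialDFS G f n := (isDFSOrder_iff_partialDFS hn f).1 hf
  have hqn : (q : ℕ) < n := q.isLt
  have hkn : (p : ℕ) + 1 < n := by omega
  set k : ℕ := (p : ℕ) + 1 with hkdef
  set K : Fin n := ⟨k, hkn⟩ with hKdef
  have hK0 : 0 < (K : ℕ) := by show 0 < k; omega
  obtain ⟨i0, hi0lt, hi0new, hi0max, hi0adj⟩ := hP.2 K hK0 K.isLt
  have hwnew : ∀ i' : Fin n, (i' : ℕ) < k → f i' ≠ f q := by
    intro i' hi' heq
    have := hP.1 i' q i'.isLt q.isLt heq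
    rw [this] at hi'
    omega
  have hpnew : HasNewNbr G f k p := ⟨f q, hadj, hwnew⟩
  have hple : (p : ℕ) ≤ (i0 : ℕ) := hi0max p (by show (p : ℕ) < k; omega) hpnew
  have hi0p : i0 = p := Fin.ext (by have : (i0 : ℕ) < k := hi0lt; omega)
  subst hi0p
  obtain ⟨f1, hag1, hf1K, hf1⟩ :=
    step_lemma hkn (partialDFS_mono (le_of_lt hkn) hP) hi0lt hi0new hi0max
      (w := f q) hadj hwnew
  obtain ⟨f2, hag2, hf2⟩ := extend_lemma hG hn (n - (k + 1)) (k + 1) (by omega) (by omega) f1 hf1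
  have hf2dfs : IsDFSOrder G f2 := (isDFSOrder_iff_partialDFS hn f2).2 hf2
  have hf20 : ∀ i : Fin n, (i : ℕ) = 0 → f2 i = r := by
    intro i hi
    rw [hag2 i (by omega), hag1 i (by omega)]
    exact hf0 i hi
  have heq : f2 = f := huniq f2 ⟨hf2dfs, hf20⟩
  have hKq : f K = f q := by
    conv_lhs => rw [← heq]
    rw [hag2 K (by show k < k + 1; omega), hf1K]
  have := hP.1 K q K.isLt q.isLt hKq
  have : (K : ℕ) = (q : ℕ) := congrArg Fin.val this
  have hKk : (K : ℕ) = k := rfl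
  omega

lemma consec_adj [Fintype V] (hG : G.Connected) (hn : Fintype.card V = n) {r : V}
    {f : Fin n → V} (hf : IsDFSOrder G f) (hf0 : ∀ i : Fin n, (i : ℕ) = 0 → f i = r)
    (huniq : ∀ g : Fin n → V,
      (IsDFSOrder G g ∧ ∀ i : Fin n, (i : ℕ) = 0 → g i = r) → g = f)
    {j : Fin n} (hj : (j : ℕ) + 1 < n) : G.Adj (f j) (f ⟨(j : ℕ) + 1, hj⟩) := by
  set J : Fin n := ⟨(j : ℕ) + 1, hj⟩ with hJdef
  have hJ0 : 0 < (J : ℕ) := by show 0 < (j : ℕ) + 1; omega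
  obtain ⟨i0, hi0lt, -, -, hi0adj⟩ := hf.2 J hJ0
  have hi0lt' : (i0 : ℕ) < (j : ℕ) + 1 := hi0lt
  have hi0j : i0 = j := by
    apply Fin.ext
    by_contra hne
    have h1 : (i0 : ℕ) + 1 < (J : ℕ) := by show (i0 : ℕ) + 1 < (j : ℕ) + 1; omega
    exact no_far_edge hG hn hf hf0 huniq h1 hi0adj
  rw [← hi0j]
  exact hi0adj

end Main
/-- A connected graph `G` on `n ≥ 2` vertices has exactly one valid DFS
ordering starting at a vertex `r` if and only if `G` is a path graph with endpoint `r`. -/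
theorem stmt_8 {V : Type*} [Fintype V] (G : SimpleGraph V) (hG : G.Connected)
    {n : ℕ} (hn : Fintype.card V = n) (hn2 : 2 ≤ n) (r : V) :
    (∃! f : Fin n → V, IsDFSOrder G f ∧ ∀ i : Fin n, (i : ℕ) = 0 → f i = r) ↔
      IsPathGraphFrom G r := by
  constructor
  · rintro ⟨f, ⟨hf, hf0⟩, huniq⟩
    have huniq' : ∀ g : Fin n → V,
        (IsDFSOrder G g ∧ ∀ i : Fin n, (i : ℕ) = 0 → g i = r) → g = f :=
      fun g hg => huniq g hg
    refine ⟨n, f, hf.1, hf0, fun a b => ⟨?_, ?_⟩⟩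
    · intro hab
      obtain ⟨p, rfl⟩ := hf.1.2 a
      obtain ⟨q, rfl⟩ := hf.1.2 b
      have hpq : p ≠ q := fun h => G.irrefl (h ▸ hab)
      rcases lt_or_gt_of_ne hpq with h | h
      · have hlt : (p : ℕ) < (q : ℕ) := h
        have h1 : ¬ ((p : ℕ) + 1 < (q : ℕ)) :=
          fun hh => no_far_edge hG hn hf hf0 huniq' hh hab
        have hq : (q : ℕ) = (p : ℕ) + 1 := by omega
        have hj : (p : ℕ) + 1 < n := by have := q.isLt; omega
        exact ⟨p, hj, Or.inl ⟨rfl, congrArg f (Fin.ext hq.symm)⟩⟩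
      · have hlt : (q : ℕ) < (p : ℕ) := h
        have h1 : ¬ ((q : ℕ) + 1 < (p : ℕ)) :=
          fun hh => no_far_edge hG hn hf hf0 huniq' hh hab.symm
        have hp : (p : ℕ) = (q : ℕ) + 1 := by omega
        have hj : (q : ℕ) + 1 < n := by have := p.isLt; omega
        exact ⟨q, hj, Or.inr ⟨rfl, congrArg f (Fin.ext hp.symm)⟩⟩
    · rintro ⟨j, hj, (⟨rfl, rfl⟩ | ⟨rfl, rfl⟩)⟩
      · exact consec_adj hG hn hf hf0 huniq' hj
      · exact (consec_adj hG hn hf hf0 huniq' hj).symm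
  · rintro ⟨m, w, hbij, hr, hadj⟩
    have hcard : m = n := by
      have h := Fintype.card_of_bijective hbij
      rw [Fintype.card_fin] at h
      omega
    have hcard' : n = m := hcard.symm
    subst hcard'
    have hwdfs : IsDFSOrder G w := by
      refine ⟨hbij, ?_⟩
      intro j hj0
      have hjn : (j : ℕ) < n := j.isLt
      set i : Fin n := ⟨(j : ℕ) - 1, by omega⟩ with hidef
      have hiv : (i : ℕ) = (j : ℕ) - 1 := rfl
      have hj1 : (i : ℕ) + 1 < n := by omega
      have hconsec : G.Adj (w i) (w j) :=
        (hadj (w i) (w j)).2 ⟨i, hj1, Or.inl ⟨rfl,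
          congrArg w (Fin.ext (show (i : ℕ) + 1 = (j : ℕ) by omega))⟩⟩
      refine ⟨i, by omega, ⟨w j, hconsec, ?_⟩, ?_, hconsec⟩
      · intro i' hi' heq
        have : (i' : ℕ) = (j : ℕ) := congrArg Fin.val (hbij.injective heq)
        omega
      · intro i' hi' _
        omega
    have huniqw : ∀ g : Fin n → V,
        (IsDFSOrder G g ∧ ∀ i : Fin n, (i : ℕ) = 0 → g i = r) → g = w := by
      rintro g ⟨hg, hg0⟩
      have key : ∀ N : ℕ, ∀ j : Fin n, (j : ℕ) = N → g j = w j := by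
        intro N
        induction N using Nat.strong_induction_on with
        | _ N ih =>
          intro j hjN
          by_cases h0 : (j : ℕ) = 0
          · rw [hg0 j h0, hr j h0]
          · have hj0 : 0 < (j : ℕ) := Nat.pos_of_ne_zero h0
            have IH : ∀ i : Fin n, (i : ℕ) < (j : ℕ) → g i = w i := by
              intro i hi
              exact ih (i : ℕ) (by omega) i rfl
            obtain ⟨i0, hi0lt, hi0new, hi0max, hi0adj⟩ := hg.2 j hj0
            have hjn : (j : ℕ) < n := j.isLt
            set i1 : Fin n := ⟨(j : ℕ) - 1, by omega⟩ with hi1def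
            have hi1v : (i1 : ℕ) = (j : ℕ) - 1 := rfl
            have hi1j : (i1 : ℕ) + 1 < n := by omega
            have hconsec : G.Adj (w i1) (w j) :=
              (hadj (w i1) (w j)).2 ⟨i1, hi1j, Or.inl ⟨rfl,
                congrArg w (Fin.ext (show (i1 : ℕ) + 1 = (j : ℕ) by omega))⟩⟩
            have hgi1 : g i1 = w i1 := IH i1 (by omega)
            have hWnew : ∀ i' : Fin n, (i' : ℕ) < (j : ℕ) → g i' ≠ w j := by
              intro i' hi' heq
              rw [IH i' hi'] at heq
              have : (i' : ℕ) = (j : ℕ) := congrArg Fin.val (hbij.injective heq)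
              omega
            have hnew1 : HasNewNbr G g (j : ℕ) i1 :=
              ⟨w j, by rw [hgi1]; exact hconsec, hWnew⟩
            have hle : (j : ℕ) - 1 ≤ (i0 : ℕ) := by
              have := hi0max i1 (by omega) hnew1
              omega
            have hi0v : (i0 : ℕ) = (j : ℕ) - 1 := by omega
            have hgi0 : g i0 = w i1 := by
              rw [IH i0 (by omega)]
              exact congrArg w (Fin.ext (by omega))
            rw [hgi0] at hi0adj
            obtain ⟨jj, hjj, hcase⟩ := (hadj (w i1) (g j)).1 hi0adj
            rcases hcase with ⟨h1, h2⟩ | ⟨h1, h2⟩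
            · have hjji1 : (jj : ℕ) = (i1 : ℕ) := congrArg Fin.val (hbij.injective h1)
              rw [← h2]
              exact congrArg w (Fin.ext (show (jj : ℕ) + 1 = (j : ℕ) by omega))
            · have h3 : (jj : ℕ) + 1 = (i1 : ℕ) := congrArg Fin.val (hbij.injective h2)
              have hjjlt : (jj : ℕ) < (j : ℕ) := by omega
              have hgj : g j = g jj := by rw [IH jj hjjlt, h1]
              have : (j : ℕ) = (jj : ℕ) := congrArg Fin.val (hg.1.injective hgj)
              omega
      funext j
      exact key (j : ℕ) j rfl
    exact ⟨w, ⟨hwdfs, hr⟩, huniqw⟩
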